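/- arXiv:1506.03980 — 2 statements merged into one kernel-verified Lean document; each statement's English description precedes it below -/
import Mathlib

section
/- For y ∉ closure(𝒪) where 𝒪 ⊂ ℝ³ is a nonempty open set, and τ > 0, one has ∫_𝒪 |∇_x p_{τ,y}(x)|² dx ≤ C τ (1 + 1/(τ d(y,𝒪))) e^{-2τ d(y,𝒪)} for some absolute constant C > 0, where p_{τ,y}(x) = e^{-τ|x-y|}/(4π|x-y|). -/
open MeasureTheory Real Metric Set

set_option maxHeartbeats 1000000 in
/-- upper bound on the L² norm of the gradient of the Yukawa potential,
|∇ p_{τ,y}(x)| = (τ r + 1)/(4π r²) e^{-τ r}, r = |x - y|, over an open set 𝒪 with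
y ∉ closure 𝒪, with an absolute constant C. -/
theorem stmt1 :
    ∃ C > (0 : ℝ), ∀ (O : Set (EuclideanSpace ℝ (Fin 3))), IsOpen O → O.Nonempty →
      ∀ (y : EuclideanSpace ℝ (Fin 3)), y ∉ closure O →
      ∀ τ : ℝ, 0 < τ →
      ∫ x in O, ((τ * ‖x - y‖ + 1) / (4 * π * ‖x - y‖ ^ 2) * Real.exp (-τ * ‖x - y‖)) ^ 2
        ≤ C * τ * (1 + 1 / (τ * infDist y O)) * Real.exp (-2 * τ * infDist y O) := by
  have hπ : 0 < π := Real.pi_pos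
  obtain ⟨B, hB_def⟩ : ∃ B : ℝ, B = (volume (ball (0 : EuclideanSpace ℝ (Fin 3)) 1)).toReal :=
    ⟨_, rfl⟩
  have hB : 0 < B := hB_def ▸
    ENNReal.toReal_pos (measure_ball_pos volume 0 one_pos).ne' measure_ball_lt_top.ne
  refine ⟨3 * B / (8 * π ^ 2), div_pos (mul_pos (by norm_num) hB) (by positivity), ?_⟩
  intro O hO hne y hy τ hτ
  obtain ⟨d, hd_def⟩ : ∃ d : ℝ, d = infDist y O := ⟨_, rfl⟩
  rw [← hd_def]
  have hd : 0 < d := by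
    rw [hd_def, ← infDist_closure]
    exact (isClosed_closure.notMem_iff_infDist_pos hne.closure).1 hy
  obtain ⟨f, hf_def⟩ : ∃ f : ℝ → ℝ,
      f = fun r => ((τ * r + 1) / (4 * π * r ^ 2) * Real.exp (-τ * r)) ^ 2 := ⟨_, rfl⟩
  obtain ⟨H, hH_def⟩ : ∃ H : ℝ → ℝ, H = (Ici d).indicator f := ⟨_, rfl⟩
  have hfnonneg : ∀ r, 0 ≤ f r := fun r => by rw [hf_def]; positivity
  have hHnonneg : ∀ r, 0 ≤ H r := fun r => by
    rw [hH_def]; exact Set.indicator_nonneg (fun r _ => hfnonneg r) r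
  have hmem : ∀ x ∈ O, ‖x - y‖ ∈ Ici d := by
    intro x hx
    have h1 : d ≤ dist y x := hd_def ▸ infDist_le_dist_of_mem hx
    rwa [dist_eq_norm, norm_sub_rev] at h1
  have hfmeas : Measurable f := by rw [hf_def]; fun_prop
  have hHmeas : Measurable H := by rw [hH_def]; exact hfmeas.indicator measurableSet_Ici
  -- key pointwise bound : f r ≤ 1/(16 π² r⁴) for r ≥ d
  have hfbound : ∀ r ∈ Ici d, f r ≤ 1 / (16 * π ^ 2 * r ^ 4) := by
    intro r hr
    have hrpos : 0 < r := lt_of_lt_of_le hd hr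
    have hkey : (τ * r + 1) * Real.exp (-τ * r) ≤ 1 := by
      have h1 : τ * r + 1 ≤ Real.exp (τ * r) := Real.add_one_le_exp _
      have h2 : 0 < Real.exp (-τ * r) := Real.exp_pos _
      calc (τ * r + 1) * Real.exp (-τ * r) ≤ Real.exp (τ * r) * Real.exp (-τ * r) :=
            mul_le_mul_of_nonneg_right h1 h2.le
        _ = 1 := by rw [← Real.exp_add]; ring_nf; exact Real.exp_zero
    have hnn : 0 ≤ (τ * r + 1) * Real.exp (-τ * r) := by positivity
    have hsq : ((τ * r + 1) * Real.exp (-τ * r)) ^ 2 ≤ 1 := by nlinarith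
    have heq : f r = ((τ * r + 1) * Real.exp (-τ * r)) ^ 2 / (16 * π ^ 2 * r ^ 4) := by
      simp only [hf_def]; field_simp; ring
    rw [heq]
    exact div_le_div_of_nonneg_right hsq (by positivity) |>.trans_eq rfl
  -- integrability of the radial majorant over ℝ³
  have hdomint : Integrable
      (fun x : EuclideanSpace ℝ (Fin 3) =>
        (1 + d) ^ 4 / (16 * π ^ 2 * d ^ 4) * (1 + ‖x - y‖) ^ (-(4 : ℝ))) := by
    have h3 : ((Module.finrank ℝ (EuclideanSpace ℝ (Fin 3)) : ℝ)) < 4 := by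
      rw [finrank_euclideanSpace_fin]; norm_num
    exact ((integrable_one_add_norm h3).comp_sub_right y).const_mul _
  have hHbound : ∀ x : EuclideanSpace ℝ (Fin 3),
      H ‖x - y‖ ≤ (1 + d) ^ 4 / (16 * π ^ 2 * d ^ 4) * (1 + ‖x - y‖) ^ (-(4 : ℝ)) := by
    intro x
    set r := ‖x - y‖ with hr_def
    have hrnn : 0 ≤ r := norm_nonneg _
    have hrpow : (1 + r) ^ (-(4 : ℝ)) = ((1 + r) ^ 4)⁻¹ := by
      rw [Real.rpow_neg (by linarith), show (4 : ℝ) = ((4 : ℕ) : ℝ) by norm_num,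
        Real.rpow_natCast]
    by_cases hrd : r ∈ Ici d
    · have hrpos : 0 < r := lt_of_lt_of_le hd hrd
      rw [hH_def, Set.indicator_of_mem hrd]
      refine (hfbound r hrd).trans ?_
      rw [hrpow]
      have hre : (1 + d) ^ 4 / (16 * π ^ 2 * d ^ 4) * ((1 + r) ^ 4)⁻¹
          = (1 + d) ^ 4 / (16 * π ^ 2 * d ^ 4 * (1 + r) ^ 4) := by
        rw [← div_eq_mul_inv, div_div]
      rw [hre, div_le_div_iff₀ (by positivity) (by positivity)]
      have hineq : d * (1 + r) ≤ r * (1 + d) := by nlinarith [mem_Ici.1 hrd]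
      have h4 : (d * (1 + r)) ^ 4 ≤ (r * (1 + d)) ^ 4 :=
        pow_le_pow_left₀ (by positivity) hineq 4
      rw [mul_pow, mul_pow] at h4
      nlinarith [pow_pos hπ 2, h4]
    · rw [hH_def, Set.indicator_of_notMem hrd]
      positivity
  have hHint : Integrable (fun x : EuclideanSpace ℝ (Fin 3) => H ‖x - y‖) := by
    refine hdomint.mono' ?_ ?_
    · exact (hHmeas.comp
        ((continuous_id.sub continuous_const).norm.measurable)).aestronglyMeasurable
    · exact Filter.Eventually.of_forall fun x => by
        rw [Real.norm_of_nonneg (hHnonneg _)]; exact hHbound x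
  -- evaluate / bound the radial integral
  have hexp_int : IntegrableOn (fun r : ℝ => Real.exp (-(2 * τ) * r)) (Ioi d) :=
    exp_neg_integrableOn_Ioi d (by positivity)
  have hrpow_int : IntegrableOn (fun r : ℝ => r ^ (-(2 : ℝ))) (Ioi d) :=
    integrableOn_Ioi_rpow_of_lt (by norm_num) hd
  obtain ⟨φ, hφ_def⟩ : ∃ φ : ℝ → ℝ, φ = fun r => τ ^ 2 / (8 * π ^ 2) * Real.exp (-(2 * τ) * r)
      + Real.exp (-(2 * τ) * d) / (8 * π ^ 2) * r ^ (-(2 : ℝ)) := ⟨_, rfl⟩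
  have hφint : IntegrableOn φ (Ioi d) := by
    rw [hφ_def]; exact (hexp_int.const_mul _).add (hrpow_int.const_mul _)
  have hexp_val : ∫ r in Ioi d, Real.exp (-(2 * τ) * r)
      = (2 * τ)⁻¹ * Real.exp (-(2 * τ) * d) := by
    have h := integral_comp_mul_left_Ioi (fun x => Real.exp (-x)) d
      (show (0:ℝ) < 2 * τ by positivity)
    simp only [smul_eq_mul] at h
    rw [integral_exp_neg_Ioi] at h
    simp only [neg_mul]
    exact h
  have hrpow_val : ∫ r in Ioi d, r ^ (-(2 : ℝ)) = d⁻¹ := by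
    rw [integral_Ioi_rpow_of_lt (by norm_num) hd]
    norm_num [Real.rpow_neg_one]
  have hφ_val : ∫ r in Ioi d, φ r
      = (τ / (16 * π ^ 2) + 1 / (8 * π ^ 2 * d)) * Real.exp (-(2 * τ) * d) := by
    simp only [hφ_def]
    rw [integral_add (hexp_int.const_mul _) (hrpow_int.const_mul _),
      integral_const_mul, integral_const_mul, hexp_val, hrpow_val]
    field_simp
    ring
  have hpt : ∀ r ∈ Ioi d, r ^ 2 * f r ≤ φ r := by
    intro r hr
    have hrd : d < r := hr
    have hrpos : 0 < r := hd.trans hrd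
    have hs2 : Real.exp (-(2 * τ) * r) = Real.exp (-τ * r) ^ 2 := by
      rw [← Real.exp_nat_mul]; congr 1; push_cast; ring
    have hsd : Real.exp (-τ * r) ^ 2 ≤ Real.exp (-(2 * τ) * d) := by
      rw [← hs2]
      apply Real.exp_le_exp.2
      nlinarith
    have hrpow : r ^ (-(2 : ℝ)) = (r ^ 2)⁻¹ := by
      rw [Real.rpow_neg hrpos.le, show (2 : ℝ) = ((2 : ℕ) : ℝ) by norm_num, Real.rpow_natCast]
    have h1 : r ^ 2 * f r = (τ * r + 1) ^ 2 * Real.exp (-τ * r) ^ 2 / (16 * π ^ 2 * r ^ 2) := by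
      simp only [hf_def]; field_simp; ring
    have h2 : τ ^ 2 / (8 * π ^ 2) * Real.exp (-τ * r) ^ 2
        + Real.exp (-τ * r) ^ 2 / (8 * π ^ 2) * (r ^ 2)⁻¹ ≤ φ r := by
      simp only [hφ_def, hs2, hrpow]
      have h3 : Real.exp (-τ * r) ^ 2 / (8 * π ^ 2) * (r ^ 2)⁻¹
          ≤ Real.exp (-(2 * τ) * d) / (8 * π ^ 2) * (r ^ 2)⁻¹ := by
        gcongr
      linarith
    refine le_trans ?_ h2
    rw [h1, div_le_iff₀ (by positivity)]
    calc (τ * r + 1) ^ 2 * Real.exp (-τ * r) ^ 2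
        ≤ (2 * (τ * r) ^ 2 + 2) * Real.exp (-τ * r) ^ 2 := by
          nlinarith [sq_nonneg ((τ * r - 1) * Real.exp (-τ * r))]
      _ = (τ ^ 2 / (8 * π ^ 2) * Real.exp (-τ * r) ^ 2
            + Real.exp (-τ * r) ^ 2 / (8 * π ^ 2) * (r ^ 2)⁻¹) * (16 * π ^ 2 * r ^ 2) := by
          field_simp; ring
  have hradial : ∫ r in Ioi (0:ℝ), r ^ 2 * H r
      ≤ (τ / (16 * π ^ 2) + 1 / (8 * π ^ 2 * d)) * Real.exp (-(2 * τ) * d) := by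
    have e1 : ∫ r in Ioi (0:ℝ), r ^ 2 * H r
        = ∫ r in Ioi (0:ℝ), (Ici d).indicator (fun r => r ^ 2 * f r) r := by
      refine integral_congr_ae (Filter.Eventually.of_forall fun r => ?_)
      by_cases h : r ∈ Ici d
      · simp only [hH_def, Set.indicator_of_mem h]
      · simp only [hH_def, Set.indicator_of_notMem h, mul_zero]
    have e2 : Ioi (0:ℝ) ∩ Ici d = Ici d :=
      inter_eq_self_of_subset_right (fun r hr => lt_of_lt_of_le hd hr)
    rw [e1, setIntegral_indicator measurableSet_Ici, e2, integral_Ici_eq_integral_Ioi,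
      ← hφ_val]
    refine integral_mono_of_nonneg ?_ hφint ?_
    · exact Filter.Eventually.of_forall fun r => mul_nonneg (sq_nonneg r) (hfnonneg r)
    · exact (ae_restrict_iff' measurableSet_Ioi).2 (Filter.Eventually.of_forall hpt)
  -- polar coordinates
  have hpolar : ∫ x : EuclideanSpace ℝ (Fin 3), H ‖x‖
      = 3 * B * ∫ r in Ioi (0:ℝ), r ^ 2 * H r := by
    have h := integral_fun_norm_addHaar (volume : Measure (EuclideanSpace ℝ (Fin 3))) H
    rw [finrank_euclideanSpace_fin] at h
    rw [measureReal_def, ← hB_def] at h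
    simp only [smul_eq_mul, nsmul_eq_mul, Nat.cast_ofNat] at h
    rw [h]
    norm_num
    ring
  calc ∫ x in O, ((τ * ‖x - y‖ + 1) / (4 * π * ‖x - y‖ ^ 2) * Real.exp (-τ * ‖x - y‖)) ^ 2
      = ∫ x in O, H ‖x - y‖ := by
        refine setIntegral_congr_fun hO.measurableSet fun x hx => ?_
        rw [hH_def, Set.indicator_of_mem (hmem x hx), hf_def]
    _ ≤ ∫ x : EuclideanSpace ℝ (Fin 3), H ‖x - y‖ :=
        setIntegral_le_integral hHint (Filter.Eventually.of_forall fun x => hHnonneg _)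
    _ = ∫ x : EuclideanSpace ℝ (Fin 3), H ‖x‖ :=
        integral_sub_right_eq_self (fun x => H ‖x‖) y
    _ = 3 * B * ∫ r in Ioi (0:ℝ), r ^ 2 * H r := hpolar
    _ ≤ 3 * B * ((τ / (16 * π ^ 2) + 1 / (8 * π ^ 2 * d)) * Real.exp (-(2 * τ) * d)) :=
        mul_le_mul_of_nonneg_left hradial (by positivity)
    _ ≤ 3 * B / (8 * π ^ 2) * τ * (1 + 1 / (τ * d)) * Real.exp (-2 * τ * d) := by
        have he : -(2 * τ) * d = -2 * τ * d := by ring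
        rw [he]
        have hτd : τ * (1 + 1 / (τ * d)) = τ + 1 / d := by field_simp
        have hrhs : 3 * B / (8 * π ^ 2) * τ * (1 + 1 / (τ * d)) * Real.exp (-2 * τ * d)
            = 3 * B * ((τ / (8 * π ^ 2) + 1 / (8 * π ^ 2 * d)) * Real.exp (-2 * τ * d)) := by
          rw [mul_assoc (3 * B / (8 * π ^ 2)) τ _, hτd]
          field_simp
        rw [hrhs]
        have hcoef : τ / (16 * π ^ 2) + 1 / (8 * π ^ 2 * d)
            ≤ τ / (8 * π ^ 2) + 1 / (8 * π ^ 2 * d) := by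
          gcongr
          norm_num
        have hexp_pos : (0:ℝ) < Real.exp (-2 * τ * d) := Real.exp_pos _
        have h5 := mul_le_mul_of_nonneg_right hcoef hexp_pos.le
        nlinarith
end

section
/- Let 𝒪 ⊂ ℝ³ be a nonempty open set, y ∉ closure(𝒪), and d > d(y,𝒪). Then there exists a constant C(𝒪,y,d) > 0 such that for all τ ≥ 0, ∫_𝒪 |∇_x p_{τ,y}(x)|² dx ≥ C(𝒪,y,d) τ² e^{-2τd}. -/
open MeasureTheory Real Metric

/-- lower bound ∫_𝒪 |∇ p_{τ,y}|² ≥ C τ² e^{-2τd} for y ∉ closure 𝒪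
and any d > d(y,𝒪). -/
theorem stmt2
    (O : Set (EuclideanSpace ℝ (Fin 3))) (hO : IsOpen O) (hOne : O.Nonempty)
    (y : EuclideanSpace ℝ (Fin 3)) (hy : y ∉ closure O)
    (d : ℝ) (hd : infDist y O < d) :
    ∃ C > (0 : ℝ), ∀ τ : ℝ, 0 ≤ τ →
      C * τ ^ 2 * Real.exp (-2 * τ * d)
        ≤ ∫ x in O, ((τ * ‖x - y‖ + 1) / (4 * π * ‖x - y‖ ^ 2)
            * Real.exp (-τ * ‖x - y‖)) ^ 2 := by
  set ρ := infDist y O with hρdef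
  have hρ : 0 < ρ := by
    rw [hρdef, ← infDist_closure]
    exact (isClosed_closure.notMem_iff_infDist_pos hOne.closure).1 hy
  have hdpos : 0 < d := hρ.trans hd
  have hπ : (0:ℝ) < π := Real.pi_pos
  -- distance from y bounded below on O
  have hdistlow : ∀ x ∈ O, ρ ≤ ‖x - y‖ := by
    intro x hx
    have := infDist_le_dist_of_mem (x := y) hx
    rwa [dist_comm, dist_eq_norm] at this
  -- pick a point x₀ ∈ O with dist y x₀ < d
  obtain ⟨x₀, hx₀O, hx₀d⟩ := (infDist_lt_iff hOne).1 hd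
  obtain ⟨ε₀, hε₀, hball₀⟩ := Metric.isOpen_iff.1 hO x₀ hx₀O
  set ε : ℝ := min (ε₀ / 2) ((d - dist y x₀) / 2) with hεdef
  have hε : 0 < ε := lt_min (by linarith) (by linarith)
  have hballO : ball x₀ ε ⊆ O := by
    intro z hz
    apply hball₀
    have h1 : dist z x₀ < ε := mem_ball.1 hz
    have h2 : ε ≤ ε₀ / 2 := min_le_left _ _
    exact mem_ball.2 (by linarith)
  have hballd : ∀ x ∈ ball x₀ ε, ‖x - y‖ ≤ d := by
    intro x hx
    have h1 : dist x x₀ < ε := hx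
    have h2 : ε ≤ (d - dist y x₀) / 2 := min_le_right _ _
    have : dist x y ≤ dist x x₀ + dist x₀ y := dist_triangle x x₀ y
    rw [dist_comm x₀ y] at this
    rw [← dist_eq_norm]
    linarith
  -- the constant
  set V : ℝ := (volume (ball x₀ ε)).toReal with hVdef
  have hV : 0 < V := ENNReal.toReal_pos (measure_ball_pos volume x₀ hε).ne'
    (measure_ball_lt_top).ne
  refine ⟨V * (ρ / (4 * π * d ^ 2)) ^ 2, by positivity, ?_⟩
  intro τ hτ
  set f : EuclideanSpace ℝ (Fin 3) → ℝ := fun x =>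
    ((τ * ‖x - y‖ + 1) / (4 * π * ‖x - y‖ ^ 2) * Real.exp (-τ * ‖x - y‖)) ^ 2 with hfdef
  have hfnonneg : ∀ x, 0 ≤ f x := fun x => sq_nonneg _
  -- integrability of f on O
  have hfmeas : AEStronglyMeasurable f (volume.restrict O) := by
    apply ContinuousOn.aestronglyMeasurable _ hO.measurableSet
    apply ContinuousOn.pow
    apply ContinuousOn.mul
    · apply ContinuousOn.div
      · fun_prop
      · fun_prop
      · intro x hx
        have h1 := hdistlow x hx
        have h2 : 0 < ‖x - y‖ := hρ.trans_le h1
        positivity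
    · fun_prop
  have hbound : ∀ x ∈ O, ‖f x‖ ≤ ((1 + ρ) / ρ) ^ 4 / (16 * π ^ 2) *
      ((1:ℝ) + ‖x - y‖) ^ (-(4:ℝ)) := by
    intro x hx
    have hr : ρ ≤ ‖x - y‖ := hdistlow x hx
    have hrpos : 0 < ‖x - y‖ := hρ.trans_le hr
    set r := ‖x - y‖
    have h1 : (τ * r + 1) * Real.exp (-τ * r) ≤ 1 := by
      have := Real.add_one_le_exp (τ * r)
      have he : 0 < Real.exp (-τ * r) := Real.exp_pos _
      calc (τ * r + 1) * Real.exp (-τ * r) ≤ Real.exp (τ * r) * Real.exp (-τ * r) := by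
            apply mul_le_mul_of_nonneg_right this he.le
        _ = 1 := by rw [← Real.exp_add]; ring_nf; exact Real.exp_zero
    have h0 : 0 ≤ (τ * r + 1) * Real.exp (-τ * r) := by positivity
    have hfval : f x = ((τ * r + 1) * Real.exp (-τ * r)) ^ 2 / (16 * π ^ 2 * r ^ 4) := by
      rw [hfdef]
      show ((τ * r + 1) / (4 * π * r ^ 2) * Real.exp (-τ * r)) ^ 2 = _
      field_simp
      ring
    have h2 : f x ≤ 1 / (16 * π ^ 2 * r ^ 4) := by
      rw [hfval]
      apply div_le_div_of_nonneg_right ?_ (by positivity)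
      calc ((τ * r + 1) * Real.exp (-τ * r)) ^ 2 ≤ 1 ^ 2 := by
            apply pow_le_pow_left₀ h0 h1
        _ = 1 := one_pow 2
    have h3 : (1 + r) ≤ r * ((1 + ρ) / ρ) := by
      rw [mul_div_assoc']
      rw [le_div_iff₀ hρ]
      nlinarith
    have h4 : (1 + r) ^ 4 ≤ r ^ 4 * ((1 + ρ) / ρ) ^ 4 := by
      rw [← mul_pow]
      apply pow_le_pow_left₀ (by positivity) h3
    have h5 : ((1:ℝ) + r) ^ (-(4:ℝ)) = 1 / (1 + r) ^ 4 := by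
      rw [Real.rpow_neg (by positivity), ← Real.rpow_natCast (1 + r) 4]
      norm_num
    rw [Real.norm_of_nonneg (hfnonneg x), h5]
    calc f x ≤ 1 / (16 * π ^ 2 * r ^ 4) := h2
      _ ≤ ((1 + ρ) / ρ) ^ 4 / (16 * π ^ 2) * (1 / (1 + r) ^ 4) := by
          rw [div_mul_div_comm, mul_one]
          rw [div_le_div_iff₀ (by positivity) (by positivity)]
          calc 1 * (16 * π ^ 2 * (1 + r) ^ 4) = 16 * π ^ 2 * (1 + r) ^ 4 := by ring
            _ ≤ 16 * π ^ 2 * (r ^ 4 * ((1 + ρ) / ρ) ^ 4) := by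
                apply mul_le_mul_of_nonneg_left h4 (by positivity)
            _ = ((1 + ρ) / ρ) ^ 4 * (16 * π ^ 2 * r ^ 4) := by ring
  have hgint : Integrable (fun x : EuclideanSpace ℝ (Fin 3) =>
      ((1 + ρ) / ρ) ^ 4 / (16 * π ^ 2) * ((1:ℝ) + ‖x - y‖) ^ (-(4:ℝ))) := by
    apply Integrable.const_mul
    have hbase : Integrable (fun x : EuclideanSpace ℝ (Fin 3) =>
        ((1:ℝ) + ‖x‖) ^ (-(4:ℝ))) := by
      apply integrable_one_add_norm
      simp [finrank_euclideanSpace]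
      norm_num
    have hmp : MeasurePreserving (fun x : EuclideanSpace ℝ (Fin 3) => x - y)
        volume volume := measurePreserving_sub_right volume y
    exact (hmp.integrable_comp_emb (MeasurableEquiv.subRight y).measurableEmbedding).2 hbase
  have hfint : IntegrableOn f O := by
    apply Integrable.mono' hgint.integrableOn hfmeas
    rw [ae_restrict_iff' hO.measurableSet]
    exact ae_of_all _ hbound
  -- lower bound on the ball
  have hlow : ∀ x ∈ ball x₀ ε, τ * ρ / (4 * π * d ^ 2) * Real.exp (-τ * d) ≤
      (τ * ‖x - y‖ + 1) / (4 * π * ‖x - y‖ ^ 2) * Real.exp (-τ * ‖x - y‖) := by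
    intro x hx
    have hxO := hballO hx
    have hr1 : ρ ≤ ‖x - y‖ := hdistlow x hxO
    have hr2 : ‖x - y‖ ≤ d := hballd x hx
    have hrpos : 0 < ‖x - y‖ := hρ.trans_le hr1
    have hnum : τ * ρ ≤ τ * ‖x - y‖ + 1 := by nlinarith
    have hsq : ‖x - y‖ ^ 2 ≤ d ^ 2 := by nlinarith
    have hden : 4 * π * ‖x - y‖ ^ 2 ≤ 4 * π * d ^ 2 := by nlinarith [hπ]
    have hexp : Real.exp (-τ * d) ≤ Real.exp (-τ * ‖x - y‖) := by
      apply Real.exp_le_exp.2; nlinarith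
    have hfrac : τ * ρ / (4 * π * d ^ 2) ≤ (τ * ‖x - y‖ + 1) / (4 * π * ‖x - y‖ ^ 2) :=
      div_le_div₀ (by positivity) hnum (by positivity) hden
    apply mul_le_mul hfrac hexp (Real.exp_pos _).le
    positivity
  have hlowsq : ∀ x ∈ ball x₀ ε,
      (τ * ρ / (4 * π * d ^ 2) * Real.exp (-τ * d)) ^ 2 ≤ f x := by
    intro x hx
    apply pow_le_pow_left₀ (by positivity) (hlow x hx)
  have step1 : (τ * ρ / (4 * π * d ^ 2) * Real.exp (-τ * d)) ^ 2 * V ≤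
      ∫ x in ball x₀ ε, f x := by
    have := setIntegral_ge_of_const_le measurableSet_ball measure_ball_lt_top.ne hlowsq
      (hfint.mono_set hballO)
    have hVeq : (volume : Measure (EuclideanSpace ℝ (Fin 3))).real (ball x₀ ε) = V := rfl
    rw [smul_eq_mul, hVeq] at this
    linarith
  have step2 : (∫ x in ball x₀ ε, f x) ≤ ∫ x in O, f x := by
    apply setIntegral_mono_set hfint
    · exact ae_of_all _ hfnonneg
    · exact HasSubset.Subset.eventuallyLE hballO
  have hexp2 : Real.exp (-2 * τ * d) = Real.exp (-τ * d) ^ 2 := by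
    rw [← Real.exp_nat_mul]; ring_nf
  calc V * (ρ / (4 * π * d ^ 2)) ^ 2 * τ ^ 2 * Real.exp (-2 * τ * d)
      = (τ * ρ / (4 * π * d ^ 2) * Real.exp (-τ * d)) ^ 2 * V := by
        rw [hexp2]; ring
    _ ≤ ∫ x in ball x₀ ε, f x := step1
    _ ≤ ∫ x in O, f x := step2
end
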